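/- Let m ≥ 2, n ≥ 3, and let k be a unit modulo n of multiplicative order α with k^m ≡ 1 (mod n). Assume α is even, k^{α/2} ≡ −1 (mod n), and 2·deg(n,k;α) ≤ ⌊α/2⌋. Then diam(G_{m,n,k}) ≤ ⌊m/2⌋ + wt(n, k; α). -/

import Mathlib

/-- The set `Ω(i, λ) = { b₁k^{i₁} + ⋯ + b_r k^{i_r} mod n : |b_j| ≤ λ_j }` in `ℤ/nℤ`. -/
def OmegaSet (n : ℕ) (k : (ZMod n)ˣ) {r : ℕ} (i : Fin r → ℕ) (lam : Fin r → ℕ) :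
    Set (ZMod n) :=
  { x | ∃ b : Fin r → ℤ, (∀ j, |b j| ≤ (lam j : ℤ)) ∧
      x = ∑ j, (b j : ZMod n) * ((k ^ i j : (ZMod n)ˣ) : ZMod n) }

/-- A `sequence`: a strictly decreasing tuple `α−1 ≥ i₁ > i₂ > ⋯ > i_r ≥ 0`. -/
def IsSeq (α : ℕ) {r : ℕ} (i : Fin r → ℕ) : Prop :=
  (∀ j, i j ≤ α - 1) ∧ StrictAnti i

/-- `wt(n, k; i)`: the minimal total weight `λ₁ + ⋯ + λ_r` over tuples `λ`
with `Ω(i,λ) = ℤ/nℤ`. -/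
noncomputable def wtSeq (n : ℕ) (k : (ZMod n)ˣ) {r : ℕ} (i : Fin r → ℕ) : ℕ :=
  sInf { s | ∃ lam : Fin r → ℕ, OmegaSet n k i lam = Set.univ ∧ ∑ j, lam j = s }

/-- The maximal sequence `Δ : α−1 > α−2 > ⋯ > 1 > 0`. -/
def DeltaSeq (α : ℕ) : Fin α → ℕ := fun j => α - 1 - (j : ℕ)

/-- `wt(n, k; α) := wt(n, k; Δ)`. -/
noncomputable def wtAlpha (n : ℕ) (k : (ZMod n)ˣ) (α : ℕ) : ℕ :=
  wtSeq n k (DeltaSeq α)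

/-- The degree of a sequence: its largest entry. -/
noncomputable def degSeq {r : ℕ} (i : Fin r → ℕ) : ℕ := sSup (Set.range i)

/-- The codegree of a sequence: its smallest nonzero entry. -/
noncomputable def codegSeq {r : ℕ} (i : Fin r → ℕ) : ℕ :=
  sInf { v | v ∈ Set.range i ∧ v ≠ 0 }

/-- A minimal prime sequence realizing `wt(n,k;α)`: a reduced sequence (i.e. one
containing `0`) of weight `wt(n,k;α)` such that no proper reduced subsequence
has weight `wt(n,k;α)`. -/
def IsMinimalPrimeSeq (n : ℕ) (k : (ZMod n)ˣ) (α : ℕ) {r : ℕ} (i : Fin r → ℕ) : Prop :=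
  IsSeq α i ∧ 0 ∈ Set.range i ∧ wtSeq n k i = wtAlpha n k α ∧
    ∀ (q : ℕ) (i₀ : Fin q → ℕ), IsSeq α i₀ → 0 ∈ Set.range i₀ →
      Set.range i₀ ⊆ Set.range i → Set.range i₀ ≠ Set.range i →
      wtSeq n k i₀ ≠ wtAlpha n k α

/-- `deg(n,k;α)`: the smallest degree of a minimal prime sequence realizing `wt(n,k;α)`. -/
noncomputable def degNK (n : ℕ) (k : (ZMod n)ˣ) (α : ℕ) : ℕ :=
  sInf { d | ∃ (r : ℕ) (i : Fin r → ℕ), IsMinimalPrimeSeq n k α i ∧ degSeq i = d }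
/-- Relators of the split metacyclic group `⟨x, y | x^m = y^n = 1, x⁻¹yx = y^k⟩`,
with generator `0` playing the role of `x` and `1` that of `y`. -/
def metacyclicRels (m n k : ℕ) : Set (FreeGroup (Fin 2)) :=
  { FreeGroup.of 0 ^ m, FreeGroup.of 1 ^ n,
    (FreeGroup.of 0)⁻¹ * FreeGroup.of 1 * FreeGroup.of 0 * (FreeGroup.of 1 ^ k)⁻¹ }

/-- The split metacyclic group `G_{m,n,k} = ℤ_m ⋉_k ℤ_n
  = ⟨x, y | x^m = y^n = 1, x⁻¹yx = y^k⟩`. -/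
abbrev SplitMetacyclic (m n k : ℕ) : Type := PresentedGroup (metacyclicRels m n k)

/-- The generator `x` of `G_{m,n,k}`. -/
def xgen (m n k : ℕ) : SplitMetacyclic m n k := PresentedGroup.of 0

/-- The generator `y` of `G_{m,n,k}`. -/
def ygen (m n k : ℕ) : SplitMetacyclic m n k := PresentedGroup.of 1

/-- The word norm of `g` with respect to a set `S` of generators:
the least `t` such that `g` is a product of `t` elements of `S`. -/
noncomputable def wordNorm {G : Type*} [Group G] (S : Set G) (g : G) : ℕ :=
  sInf { t | ∃ w : List G, (∀ u ∈ w, u ∈ S) ∧ w.length = t ∧ w.prod = g }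

/-- The diameter of a group with respect to a set `S` of generators. -/
noncomputable def diam {G : Type*} [Group G] (S : Set G) : ℕ :=
  ⨆ g : G, wordNorm S g

/-- The generating set `{x, x⁻¹, y, y⁻¹}` of `G_{m,n,k}`. -/
def genSet (m n k : ℕ) : Set (SplitMetacyclic m n k) :=
  {xgen m n k, (xgen m n k)⁻¹, ygen m n k, (ygen m n k)⁻¹}

/-! ### Auxiliary lemmas -/

namespace MetacyclicAux

section WordBound

variable {G : Type*} [Group G]

/-- `g` is a product of at most `t` elements of `S`. -/
def WB (S : Set G) (g : G) (t : ℕ) : Prop :=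
  ∃ w : List G, (∀ u ∈ w, u ∈ S) ∧ w.length ≤ t ∧ w.prod = g

theorem WB.mono {S : Set G} {g : G} {t t' : ℕ} (h : WB S g t) (htt : t ≤ t') : WB S g t' := by
  obtain ⟨w, h1, h2, h3⟩ := h; exact ⟨w, h1, h2.trans htt, h3⟩

theorem WB_mem {S : Set G} {u : G} (h : u ∈ S) : WB S u 1 := ⟨[u], by simpa, by simp, by simp⟩

theorem WB.mul {S : Set G} {g h : G} {s t : ℕ} (hg : WB S g s) (hh : WB S h t) :
    WB S (g * h) (s + t) := by
  obtain ⟨w1, a1, b1, c1⟩ := hg; obtain ⟨w2, a2, b2, c2⟩ := hh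
  refine ⟨w1 ++ w2, ?_, ?_, ?_⟩
  · intro u hu; rcases List.mem_append.1 hu with h | h; exacts [a1 u h, a2 u h]
  · simpa using Nat.add_le_add b1 b2
  · simp [c1, c2]

theorem WB.inv {S : Set G} (hS : ∀ u ∈ S, u⁻¹ ∈ S) {g : G} {t : ℕ} (h : WB S g t) :
    WB S g⁻¹ t := by
  obtain ⟨w, h1, h2, h3⟩ := h
  refine ⟨(w.map Inv.inv).reverse, ?_, by simpa using h2, ?_⟩
  · intro u hu
    simp only [List.mem_reverse, List.mem_map] at hu
    obtain ⟨v, hv, rfl⟩ := hu; exact hS v (h1 v hv)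
  · rw [← h3, List.prod_inv_reverse]

theorem WB_pow {S : Set G} {x : G} (h : x ∈ S) (c : ℕ) : WB S (x ^ c) c := by
  refine ⟨List.replicate c x, ?_, by simp, by simp⟩
  intro u hu; rw [List.eq_of_mem_replicate hu]; exact h

theorem WB_zpow {S : Set G} {x : G} (h : x ∈ S) (h' : x⁻¹ ∈ S) (c : ℤ) :
    WB S (x ^ c) c.natAbs := by
  rcases Int.natAbs_eq c with hc | hc
  · nth_rewrite 1 [hc]; rw [zpow_natCast]; exact WB_pow h _
  · nth_rewrite 1 [hc]; rw [zpow_neg, zpow_natCast, ← inv_pow]; exact WB_pow h' _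

theorem wordNorm_le {S : Set G} {g : G} {t : ℕ} (h : WB S g t) : wordNorm S g ≤ t := by
  obtain ⟨w, h1, h2, h3⟩ := h
  exact le_trans (Nat.sInf_le ⟨w, h1, rfl, h3⟩) h2

end WordBound

section Relations

theorem mk_rel_eq_one (m n k : ℕ) {r : FreeGroup (Fin 2)} (hr : r ∈ metacyclicRels m n k) :
    PresentedGroup.mk (metacyclicRels m n k) r = 1 := by
  change (QuotientGroup.mk r : SplitMetacyclic m n k) = 1
  rw [QuotientGroup.eq_one_iff]
  exact Subgroup.subset_normalClosure hr

variable (m n k : ℕ)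

local notation "x" => xgen m n k
local notation "y" => ygen m n k

theorem x_mem : x ∈ genSet m n k := Or.inl rfl
theorem xinv_mem : x⁻¹ ∈ genSet m n k := by right; left; rfl
theorem y_mem : y ∈ genSet m n k := by right; right; left; rfl
theorem yinv_mem : y⁻¹ ∈ genSet m n k := by right; right; right; rfl

theorem genSet_symm : ∀ u ∈ genSet m n k, u⁻¹ ∈ genSet m n k := by
  intro u hu
  rcases hu with h | h | h | h <;> subst h
  · exact xinv_mem m n k
  · rw [inv_inv]; exact x_mem m n k
  · exact yinv_mem m n k
  · rw [inv_inv]; exact y_mem m n k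

theorem xpow_m : x ^ m = 1 := by
  have := mk_rel_eq_one m n k (r := FreeGroup.of 0 ^ m) (Or.inl rfl)
  simpa [xgen, PresentedGroup.of, map_pow] using this

theorem ypow_n : y ^ n = 1 := by
  have := mk_rel_eq_one m n k (r := FreeGroup.of 1 ^ n) (by right; left; rfl)
  simpa [ygen, PresentedGroup.of, map_pow] using this

theorem conj_rel : x⁻¹ * y * x = y ^ k := by
  have := mk_rel_eq_one m n k
    (r := (FreeGroup.of 0)⁻¹ * FreeGroup.of 1 * FreeGroup.of 0 * (FreeGroup.of 1 ^ k)⁻¹)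
    (by right; right; rfl)
  simp only [map_mul, map_inv, map_pow] at this
  have h := mul_eq_one_iff_eq_inv.1 this
  rw [inv_inv] at h
  simpa [xgen, ygen, PresentedGroup.of] using h

theorem ypow_congr {a b : ℤ} (h : (n : ℤ) ∣ (a - b)) : y ^ a = y ^ b := by
  obtain ⟨t, ht⟩ := h
  have ha : a = b + n * t := by linarith
  rw [ha, zpow_add, zpow_mul, zpow_natCast, ypow_n, one_zpow, mul_one]

theorem xpow_congr {a b : ℤ} (h : (m : ℤ) ∣ (a - b)) : x ^ a = x ^ b := by
  obtain ⟨t, ht⟩ := h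
  have ha : a = b + m * t := by linarith
  rw [ha, zpow_add, zpow_mul, zpow_natCast, xpow_m, one_zpow, mul_one]

theorem conj_ypow (c : ℤ) : x⁻¹ * y ^ c * x = y ^ (c * (k : ℤ)) := by
  have h1 : (x⁻¹ * y * x) ^ c = x⁻¹ * y ^ c * x := by
    have := conj_zpow (i := c) (a := x⁻¹) (b := y); simpa using this
  rw [← h1, conj_rel, ← zpow_natCast, ← zpow_mul, mul_comm]

theorem conj_ypow_pow (i : ℕ) (c : ℤ) :
    (x ^ i)⁻¹ * y ^ c * x ^ i = y ^ (c * (k : ℤ) ^ i) := by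
  induction i generalizing c with
  | zero => simp
  | succ i ih =>
    have : (x ^ (i+1))⁻¹ * y ^ c * x ^ (i+1)
        = (x ^ i)⁻¹ * (x⁻¹ * y ^ c * x) * x ^ i := by
      rw [pow_succ]; group
    rw [this, conj_ypow, ih]
    congr 1; ring

theorem swap_x (c : ℤ) : y ^ c * x = x * y ^ (c * (k : ℤ)) := by
  rw [← conj_ypow]; group

theorem swap_xinv (K' : ℕ) (hK' : (n : ℤ) ∣ ((k : ℤ) * K' - 1)) (c : ℤ) :
    y ^ c * x⁻¹ = x⁻¹ * y ^ (c * (K' : ℤ)) := by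
  have h1 : y ^ (c * (K' : ℤ)) * x = x * y ^ (c * K' * k) := swap_x m n k _
  have h2 : y ^ (c * (K' : ℤ) * k) = y ^ c := by
    apply ypow_congr
    have : c * (K' : ℤ) * k - c = c * ((k : ℤ) * K' - 1) := by ring
    rw [this]; exact Dvd.dvd.mul_left hK' c
  rw [h2] at h1
  have h3 : y ^ (c * (K' : ℤ)) = x * y ^ c * x⁻¹ := eq_mul_inv_of_mul_eq h1
  rw [h3]; group

theorem swap_xpow (j : ℕ) (c : ℤ) : ∃ e : ℤ, y ^ c * x ^ j = x ^ j * y ^ e := by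
  induction j generalizing c with
  | zero => exact ⟨c, by simp⟩
  | succ j ih =>
    obtain ⟨e, he⟩ := ih c
    refine ⟨e * k, ?_⟩
    rw [pow_succ, ← mul_assoc, he, mul_assoc, swap_x, mul_assoc]

theorem swap_xinvpow (K' : ℕ) (hK' : (n : ℤ) ∣ ((k : ℤ) * K' - 1)) (j : ℕ) (c : ℤ) :
    ∃ e : ℤ, y ^ c * (x⁻¹) ^ j = (x⁻¹) ^ j * y ^ e := by
  induction j generalizing c with
  | zero => exact ⟨c, by simp⟩
  | succ j ih =>
    obtain ⟨e, he⟩ := ih c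
    refine ⟨e * K', ?_⟩
    rw [pow_succ, ← mul_assoc, he, mul_assoc, swap_xinv m n k K' hK', mul_assoc]

theorem swap_xzpow (K' : ℕ) (hK' : (n : ℤ) ∣ ((k : ℤ) * K' - 1)) (t : ℤ) (c : ℤ) :
    ∃ e : ℤ, y ^ c * x ^ t = x ^ t * y ^ e := by
  rcases Int.natAbs_eq t with ht | ht
  · obtain ⟨e, he⟩ := swap_xpow m n k t.natAbs c
    refine ⟨e, ?_⟩
    rw [ht, zpow_natCast]; exact he
  · rw [ht, zpow_neg, zpow_natCast, ← inv_pow]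
    exact swap_xinvpow m n k K' hK' t.natAbs c

theorem normal_form (K' : ℕ) (hK' : (n : ℤ) ∣ ((k : ℤ) * K' - 1)) (g : SplitMetacyclic m n k) :
    ∃ a b : ℤ, g = x ^ a * y ^ b := by
  refine PresentedGroup.induction_on (C := fun g => ∃ a b : ℤ, g = x ^ a * y ^ b) g ?_
  intro w
  · induction w using FreeGroup.induction_on with
    | C1 => exact ⟨0, 0, by simp⟩
    | of i =>
      fin_cases i
      · exact ⟨1, 0, by simp [xgen, PresentedGroup.of]⟩
      · exact ⟨0, 1, by simp [ygen, PresentedGroup.of]⟩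
    | inv_of i _ =>
      fin_cases i
      · exact ⟨-1, 0, by simp [xgen, PresentedGroup.of]⟩
      · exact ⟨0, -1, by simp [ygen, PresentedGroup.of]⟩
    | mul u v hu hv =>
      obtain ⟨a, b, hab⟩ := hu
      obtain ⟨c, d, hcd⟩ := hv
      obtain ⟨e, he⟩ := swap_xzpow m n k K' hK' c b
      refine ⟨a + c, e + d, ?_⟩
      rw [map_mul, hab, hcd, zpow_add, zpow_add]
      rw [mul_assoc, ← mul_assoc (y ^ b), he]
      group

/-- The key telescoping estimate. -/
theorem key_bound : ∀ (r : ℕ) (i : Fin (r+1) → ℕ) (c : Fin (r+1) → ℤ), StrictAnti i →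
    i (Fin.last r) = 0 → ∀ e : ℕ,
    WB (genSet m n k) (x ^ e * y ^ (∑ j, c j * (k : ℤ) ^ (i j)))
      (Nat.dist e (i 0) + i 0 + ∑ j, (c j).natAbs) := by
  intro r
  induction r with
  | zero =>
    intro i c _ hlast e
    have h0 : i 0 = 0 := hlast
    rw [Fin.sum_univ_one, Fin.sum_univ_one, h0]
    simp only [pow_zero, mul_one, Nat.dist_zero_right]
    have := (WB_pow (x_mem m n k) e).mul (WB_zpow (y_mem m n k) (yinv_mem m n k) (c 0))
    exact this.mono (by omega)
  | succ r ih =>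
    intro i c hi hlast e
    set i' : Fin (r+1) → ℕ := i ∘ Fin.succ with hi'
    set c' : Fin (r+1) → ℤ := c ∘ Fin.succ with hc'
    have hi'anti : StrictAnti i' := hi.comp_strictMono (Fin.strictMono_succ)
    have hi'last : i' (Fin.last r) = 0 := by
      rw [hi']; simpa [Fin.succ_last] using hlast
    have IH := ih i' c' hi'anti hi'last (i 0)
    have hsum : (∑ j, c j * (k : ℤ) ^ (i j))
        = c 0 * (k : ℤ) ^ (i 0) + ∑ j, c' j * (k : ℤ) ^ (i' j) := by
      rw [Fin.sum_univ_succ]; rfl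
    have hdecomp : x ^ e * y ^ (∑ j, c j * (k : ℤ) ^ (i j))
        = (x ^ ((e : ℤ) - (i 0 : ℤ)) * y ^ (c 0)) * (x ^ (i 0) * y ^ (∑ j, c' j * (k : ℤ) ^ (i' j))) := by
      rw [hsum, zpow_add]
      rw [← conj_ypow_pow m n k (i 0) (c 0)]
      have hx : (x : SplitMetacyclic m n k) ^ (e : ℕ) * (x ^ (i 0 : ℕ))⁻¹
          = x ^ ((e : ℤ) - (i 0 : ℤ)) := by
        rw [zpow_sub, zpow_natCast, zpow_natCast]
      rw [← hx]; group
    rw [hdecomp]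
    have W := ((WB_zpow (x_mem m n k) (xinv_mem m n k) ((e : ℤ) - (i 0 : ℤ))).mul
      (WB_zpow (y_mem m n k) (yinv_mem m n k) (c 0))).mul IH
    refine W.mono ?_
    have h01 : i' 0 < i 0 := hi (by exact Fin.succ_pos 0 : (0 : Fin (r+2)) < Fin.succ 0)
    have hd1 : Nat.dist e (i 0) = ((e : ℤ) - (i 0 : ℤ)).natAbs := by rw [Nat.dist]; omega
    have hd2 : Nat.dist (i 0) (i' 0) = i 0 - i' 0 := by rw [Nat.dist]; omega
    have hsum2 : (∑ j, (c j).natAbs) = (c 0).natAbs + ∑ j, (c' j).natAbs := by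
      rw [Fin.sum_univ_succ]; rfl
    rw [hd1, hd2] at *
    omega

end Relations

section Comb

variable {n : ℕ} (k : (ZMod n)ˣ) {α : ℕ}

theorem wt_spec [NeZero n] {r : ℕ} (i : Fin r → ℕ) (h0 : 0 ∈ Set.range i) :
    ∃ lam : Fin r → ℕ, OmegaSet n k i lam = Set.univ ∧ ∑ j, lam j = wtSeq n k i := by
  have hne : { s | ∃ lam : Fin r → ℕ, OmegaSet n k i lam = Set.univ ∧ ∑ j, lam j = s }.Nonempty := by
    obtain ⟨j₀, hj₀⟩ := h0
    refine ⟨_, fun j => if j = j₀ then n else 0, ?_, rfl⟩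
    ext z
    simp only [Set.mem_univ, iff_true, OmegaSet, Set.mem_setOf_eq]
    refine ⟨fun j => if j = j₀ then (z.val : ℤ) else 0, ?_, ?_⟩
    · intro j; by_cases h : j = j₀
      · subst h; dsimp only
        rw [if_pos rfl, abs_of_nonneg (Int.ofNat_nonneg _)]
        rw [if_pos rfl]
        exact Int.ofNat_le.2 (ZMod.val_lt z).le
      · dsimp only
        rw [if_neg h, if_neg h]
        simp
    · rw [Finset.sum_eq_single j₀]
      · simp only [if_pos rfl, hj₀, pow_zero, Units.val_one, mul_one]
        push_cast
        exact (ZMod.natCast_rightInverse z).symm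
      · intro j _ hj; simp [hj]
      · intro h; exact absurd (Finset.mem_univ j₀) h
  exact Nat.sInf_mem hne

theorem isSeq_delta (hα : 1 ≤ α) : IsSeq α (DeltaSeq α) := by
  constructor
  · intro j; exact Nat.sub_le _ _
  · intro j j' h
    have hj := j.isLt; have hj' := j'.isLt
    have h' : (j : ℕ) < (j' : ℕ) := h
    simp only [DeltaSeq]
    omega

theorem zero_mem_delta (hα : 1 ≤ α) : 0 ∈ Set.range (DeltaSeq α) :=
  ⟨⟨α - 1, by omega⟩, by simp [DeltaSeq]⟩

theorem exists_minimalPrime (hα : 1 ≤ α) :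
    ∃ (r : ℕ) (i : Fin r → ℕ), IsMinimalPrimeSeq n k α i := by
  suffices h : ∀ (r : ℕ) (i : Fin r → ℕ), IsSeq α i → 0 ∈ Set.range i →
      wtSeq n k i = wtAlpha n k α → ∃ (q : ℕ) (i₀ : Fin q → ℕ), IsMinimalPrimeSeq n k α i₀ by
    exact h α (DeltaSeq α) (isSeq_delta hα) (zero_mem_delta hα) rfl
  intro r
  induction r using Nat.strong_induction_on with
  | _ r ih =>
    intro i hseq h0 hwt
    by_cases hmin : IsMinimalPrimeSeq n k α i
    · exact ⟨r, i, hmin⟩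
    · have hlast : ¬ ∀ (q : ℕ) (i₀ : Fin q → ℕ), IsSeq α i₀ → 0 ∈ Set.range i₀ →
          Set.range i₀ ⊆ Set.range i → Set.range i₀ ≠ Set.range i →
          wtSeq n k i₀ ≠ wtAlpha n k α := fun hq => hmin ⟨hseq, h0, hwt, hq⟩
      push_neg at hlast
      obtain ⟨q, i₀, h1, h2, h3, h4, h5⟩ := hlast
      have hqr : q < r := by
        have hssub : Set.range i₀ ⊂ Set.range i := ⟨h3, fun h => h4 (le_antisymm h3 h)⟩
        have hlt : (Set.range i₀).ncard < (Set.range i).ncard :=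
          Set.ncard_lt_ncard hssub (Set.finite_range i)
        have e1 : (Set.range i₀).ncard = q := by
          rw [← Nat.card_coe_set_eq, Nat.card_range_of_injective h1.2.injective,
            Nat.card_eq_fintype_card, Fintype.card_fin]
        have e2 : (Set.range i).ncard = r := by
          rw [← Nat.card_coe_set_eq, Nat.card_range_of_injective hseq.2.injective,
            Nat.card_eq_fintype_card, Fintype.card_fin]
        omega
      exact ih q hqr i₀ h1 h2 h5

theorem degNK_spec (hα : 1 ≤ α) :
    ∃ (r : ℕ) (i : Fin r → ℕ), IsMinimalPrimeSeq n k α i ∧ degSeq i = degNK n k α := by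
  have hne : { d | ∃ (r : ℕ) (i : Fin r → ℕ), IsMinimalPrimeSeq n k α i ∧ degSeq i = d }.Nonempty := by
    obtain ⟨r, i, hi⟩ := exists_minimalPrime k hα
    exact ⟨degSeq i, r, i, hi, rfl⟩
  exact Nat.sInf_mem hne

theorem entry_le_degSeq {r : ℕ} (i : Fin r → ℕ) (j : Fin r) : i j ≤ degSeq i :=
  le_csSup (Set.finite_range i).bddAbove ⟨j, rfl⟩

theorem last_eq_zero {r : ℕ} (i : Fin (r+1) → ℕ) (ha : StrictAnti i)
    (h0 : 0 ∈ Set.range i) : i (Fin.last r) = 0 := by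
  obtain ⟨j, hj⟩ := h0
  rcases eq_or_lt_of_le (Fin.le_last j) with h | h
  · rw [← h]; exact hj
  · have := ha h
    omega

end Comb

end MetacyclicAux

open MetacyclicAux in
/-- If `α = ord(k)` is even, `k^{α/2} ≡ −1 (mod n)` and
`2·deg(n,k;α) ≤ ⌊α/2⌋`, then `diam(G_{m,n,k}) ≤ ⌊m/2⌋ + wt(n,k;α)`. -/
theorem diam_split_metacyclic_bound_of_small_deg (m n k : ℕ) (hm : 2 ≤ m)
    (hn : 3 ≤ n) (hk : Nat.Coprime k n) (hkm : k ^ m ≡ 1 [MOD n]) (α : ℕ)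
    (hα : orderOf (ZMod.unitOfCoprime k hk) = α) (heven : Even α)
    (hneg : ZMod.unitOfCoprime k hk ^ (α / 2) = (-1 : (ZMod n)ˣ))
    (hdeg : 2 * degNK n (ZMod.unitOfCoprime k hk) α ≤ α / 2) :
    diam (genSet m n k) ≤ m / 2 + wtAlpha n (ZMod.unitOfCoprime k hk) α := by
  haveI : NeZero n := ⟨by omega⟩
  set ku : (ZMod n)ˣ := ZMod.unitOfCoprime k hk with hku
  set W : ℕ := wtAlpha n ku α with hW
  -- the inverse of k mod n
  set K' : ℕ := ((ku⁻¹ : (ZMod n)ˣ) : ZMod n).val with hK'def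
  have hkval : ((k : ℕ) : ZMod n) = (ku : ZMod n) := (ZMod.coe_unitOfCoprime k hk).symm
  have hK' : (n : ℤ) ∣ ((k : ℤ) * K' - 1) := by
    rw [← ZMod.intCast_zmod_eq_zero_iff_dvd]
    push_cast
    rw [hkval, hK'def, ZMod.natCast_val, ZMod.cast_id]
    rw [sub_eq_zero]
    exact_mod_cast (Units.mul_inv ku)
  -- order facts
  have hα1 : 1 ≤ α := hα ▸ orderOf_pos ku
  have hkum : ku ^ m = 1 := by
    have h1 : ((k ^ m : ℕ) : ZMod n) = ((1 : ℕ) : ZMod n) :=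
      (ZMod.natCast_eq_natCast_iff _ _ _).2 hkm
    ext
    rw [Units.val_pow_eq_pow_val, Units.val_one, ← hkval, ← Nat.cast_pow]
    simpa using h1
  have hαm : α ∣ m := hα ▸ orderOf_dvd_of_pow_eq_one hkum
  have hα2 : α / 2 ≤ m / 2 := Nat.div_le_div_right (Nat.le_of_dvd (by omega) hαm)
  -- minimal prime sequence
  obtain ⟨r, i, hmp, hdegeq⟩ := degNK_spec ku hα1
  obtain ⟨⟨hibound, hianti⟩, h0mem, hwt, -⟩ := hmp
  obtain ⟨r', rfl⟩ : ∃ r', r = r' + 1 := by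
    cases r with
    | zero => obtain ⟨j, -⟩ := h0mem; exact j.elim0
    | succ r' => exact ⟨r', rfl⟩
  have hlastz : i (Fin.last r') = 0 := last_eq_zero i hianti h0mem
  obtain ⟨lam, hOmega, hlam⟩ := wt_spec ku i h0mem
  -- the central estimate
  have key2 : ∀ e : ℕ, e ≤ m / 2 → ∀ b : ℤ,
      WB (genSet m n k) (xgen m n k ^ e * ygen m n k ^ b) (m / 2 + W) := by
    intro e he b
    have hz : ((b : ZMod n) ∈ OmegaSet n ku i lam) := by rw [hOmega]; trivial
    obtain ⟨c, hc1, hc2⟩ := hz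
    set B : ℤ := ∑ j, c j * (k : ℤ) ^ (i j) with hB
    have hyb : ygen m n k ^ b = ygen m n k ^ B := by
      apply ypow_congr
      rw [← ZMod.intCast_zmod_eq_zero_iff_dvd, hB]
      push_cast
      rw [sub_eq_zero, hkval, hc2]
      apply Finset.sum_congr rfl
      intro j _
      rw [Units.val_pow_eq_pow_val]
    have hkey := key_bound m n k r' i c hianti hlastz e
    rw [← hB] at hkey
    rw [hyb]
    refine hkey.mono ?_
    have hcsum : ∑ j, (c j).natAbs ≤ W := by
      calc ∑ j, (c j).natAbs ≤ ∑ j, lam j := by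
            refine Finset.sum_le_sum fun j _ => ?_
            have := hc1 j
            rw [Int.abs_eq_natAbs] at this
            exact_mod_cast this
        _ = wtSeq n ku i := hlam
        _ = W := hwt
    have hi0 : i 0 ≤ degNK n ku α := hdegeq ▸ entry_le_degSeq i 0
    have hdist : Nat.dist e (i 0) ≤ max e (i 0) := by rw [Nat.dist]; omega
    rw [Nat.dist]
    omega
  -- bound every element
  have hnorm : ∀ g : SplitMetacyclic m n k, wordNorm (genSet m n k) g ≤ m / 2 + W := by
    intro g
    obtain ⟨a₀, b₀, hg⟩ := normal_form m n k K' hK' g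
    set a₁ : ℤ := a₀ % m with ha₁def
    have ha₁0 : 0 ≤ a₁ := Int.emod_nonneg a₀ (by exact_mod_cast (by omega : m ≠ 0))
    have ha₁m : a₁ < m := Int.emod_lt_of_pos a₀ (by exact_mod_cast (by omega : 0 < m))
    have hxa : xgen m n k ^ a₀ = xgen m n k ^ a₁ :=
      xpow_congr m n k ⟨a₀ / m, by rw [ha₁def, Int.emod_def]; ring⟩
    set e₁ : ℕ := a₁.toNat with he₁def
    have he₁ : (e₁ : ℤ) = a₁ := Int.toNat_of_nonneg ha₁0
    have hxa' : xgen m n k ^ a₁ = xgen m n k ^ e₁ := by rw [← he₁, zpow_natCast]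
    by_cases hcase : e₁ ≤ m / 2
    · apply wordNorm_le
      rw [hg, hxa, hxa']
      exact key2 e₁ hcase b₀
    · -- pass to the inverse
      have he₁m : e₁ < m := by omega
      have he₂ : m - e₁ ≤ m / 2 := by omega
      obtain ⟨e', he'⟩ := swap_xzpow m n k K' hK' (-a₁) (-b₀)
      have hginv : g⁻¹ = xgen m n k ^ (m - e₁) * ygen m n k ^ e' := by
        rw [hg, hxa, mul_inv_rev, ← zpow_neg, ← zpow_neg, he']
        congr 1
        rw [← zpow_natCast (xgen m n k) (m - e₁)]
        apply xpow_congr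
        refine ⟨-1, ?_⟩
        push_cast [Nat.cast_sub he₁m.le]
        omega
      apply wordNorm_le
      have hWB := key2 (m - e₁) he₂ e'
      rw [← hginv] at hWB
      have hWB2 := hWB.inv (genSet_symm m n k)
      rw [inv_inv] at hWB2
      exact hWB2
  -- conclude
  have : Nonempty (SplitMetacyclic m n k) := ⟨1⟩
  show (⨆ g : SplitMetacyclic m n k, wordNorm (genSet m n k) g) ≤ m / 2 + W
  exact ciSup_le hnorm
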